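/- A CNF formula Δ is unsatisfiable (no model M satisfies M ⊨ Δ) if and only if the sequent ∅ ⊢ Δ (with the empty valuation) is derivable in the DPLL proof system. -/

import Mathlib

/-- A literal: a propositional variable (ℕ) with a sign. -/
structure Lit where
  var : ℕ
  sign : Bool
deriving DecidableEq

/-- The opposite literal. -/
def Lit.neg (l : Lit) : Lit := ⟨l.var, !l.sign⟩

/-- A clause: a finite set of literals, read disjunctively. -/
abbrev Clause := Finset Lit

/-- A CNF formula: a finite set of clauses, read conjunctively. -/
abbrev CNF := Finset Clause

/-- A valuation: a finite set of literals, read conjunctively. -/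
abbrev Valu := Finset Lit

/-- A model: a boolean assignment to literals respecting negation. -/
def IsModel (M : Lit → Bool) : Prop := ∀ l : Lit, M l = true ↔ ¬ (M (Lit.neg l) = true)

/-- `M ⊨ Γ` for a valuation (set of literals) `Γ`. -/
def SatVal (M : Lit → Bool) (Γ : Valu) : Prop := ∀ l ∈ Γ, M l = true

/-- `M ⊨ Δ` for a CNF formula `Δ`. -/
def SatCNF (M : Lit → Bool) (Δ : CNF) : Prop := ∀ C ∈ Δ, ∃ l ∈ C, M l = true

/-- A consistent valuation. -/
def Consistent (Γ : Valu) : Prop := ∀ l ∈ Γ, Lit.neg l ∉ Γ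

/-- The DPLL derivability relation `Γ ⊢ Δ`. -/
inductive DPLL : Valu → CNF → Prop
  | conflict (Γ : Valu) (Δ : CNF) : (∅ : Clause) ∈ Δ → DPLL Γ Δ
  | unit (Γ : Valu) (Δ : CNF) (l : Lit) : ({l} : Clause) ∈ Δ →
      DPLL (insert l Γ) (Δ.erase {l}) → DPLL Γ Δ
  | elim (Γ : Valu) (Δ : CNF) (C : Clause) (l : Lit) : l ∈ Γ → l ∈ C → C ∈ Δ →
      DPLL Γ (Δ.erase C) → DPLL Γ Δ
  | red (Γ : Valu) (Δ : CNF) (C : Clause) (l : Lit) : l ∈ Γ → Lit.neg l ∈ C → C ∈ Δ →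
      DPLL Γ (insert (C.erase (Lit.neg l)) (Δ.erase C)) → DPLL Γ Δ
  | split (Γ : Valu) (Δ : CNF) (l : Lit) :
      DPLL (insert l Γ) Δ → DPLL (insert (Lit.neg l) Γ) Δ → DPLL Γ Δ

/-- The sized DPLL derivability relation `Γ ⊢ⁿ Δ`. -/
inductive DPLLn : Valu → ℕ → CNF → Prop
  | conflict (Γ : Valu) (Δ : CNF) : (∅ : Clause) ∈ Δ → DPLLn Γ 0 Δ
  | unit (Γ : Valu) (Δ : CNF) (l : Lit) (n : ℕ) : ({l} : Clause) ∈ Δ →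
      DPLLn (insert l Γ) n (Δ.erase {l}) → DPLLn Γ (n + 1) Δ
  | elim (Γ : Valu) (Δ : CNF) (C : Clause) (l : Lit) (n : ℕ) : l ∈ Γ → l ∈ C → C ∈ Δ →
      DPLLn Γ n (Δ.erase C) → DPLLn Γ (n + 1) Δ
  | red (Γ : Valu) (Δ : CNF) (C : Clause) (l : Lit) (n : ℕ) : l ∈ Γ → Lit.neg l ∈ C → C ∈ Δ →
      DPLLn Γ n (insert (C.erase (Lit.neg l)) (Δ.erase C)) → DPLLn Γ (n + 1) Δ
  | split (Γ : Valu) (Δ : CNF) (l : Lit) (n m : ℕ) :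
      DPLLn (insert l Γ) n Δ → DPLLn (insert (Lit.neg l) Γ) m Δ → DPLLn Γ (n + m + 1) Δ

/-- The sized resolution derivability relation `Δ ⊢ᵣⁿ C`. -/
inductive Res : CNF → ℕ → Clause → Prop
  | sub (Δ : CNF) (C₀ C : Clause) : C₀ ∈ Δ → C₀ ⊆ C → Res Δ 0 C
  | res (Δ : CNF) (C C' : Clause) (l : Lit) (n m : ℕ) :
      Res Δ n (insert l C) → Res Δ m (insert (Lit.neg l) C') → Res Δ (n + m + 1) (C ∪ C')


lemma Lit.neg_neg (l : Lit) : l.neg.neg = l := by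
  simp [Lit.neg]

lemma Lit.neg_ne (l : Lit) : l.neg ≠ l := by
  cases l with
  | mk v s => simp [Lit.neg]

lemma dpll_sound {Γ : Valu} {Δ : CNF} (h : DPLL Γ Δ) :
    ∀ M, IsModel M → SatVal M Γ → ¬ SatCNF M Δ := by
  induction h with
  | conflict Γ Δ hmem =>
      intro M _ _ hΔ
      obtain ⟨l, hl, _⟩ := hΔ _ hmem
      simp at hl
  | unit Γ Δ l hmem _ ih =>
      intro M hM hΓ hΔ
      obtain ⟨l', hl', hMl'⟩ := hΔ _ hmem
      simp only [Finset.mem_singleton] at hl'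
      subst hl'
      refine ih M hM ?_ (fun C hC => hΔ C (Finset.mem_of_mem_erase hC))
      intro x hx
      rcases Finset.mem_insert.1 hx with rfl | hx
      · exact hMl'
      · exact hΓ x hx
  | elim Γ Δ C l hlΓ hlC hCΔ _ ih =>
      intro M hM hΓ hΔ
      exact ih M hM hΓ (fun D hD => hΔ D (Finset.mem_of_mem_erase hD))
  | red Γ Δ C l hlΓ hlC hCΔ _ ih =>
      intro M hM hΓ hΔ
      apply ih M hM hΓ
      intro D hD
      rcases Finset.mem_insert.1 hD with rfl | hD
      · obtain ⟨l', hl', hMl'⟩ := hΔ C hCΔ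
        refine ⟨l', Finset.mem_erase.2 ⟨?_, hl'⟩, hMl'⟩
        rintro rfl
        exact (hM l).1 (hΓ l hlΓ) hMl'
      · exact hΔ D (Finset.mem_of_mem_erase hD)
  | split Γ Δ l _ _ ih1 ih2 =>
      intro M hM hΓ hΔ
      by_cases h : M l = true
      · refine ih1 M hM ?_ hΔ
        intro x hx
        rcases Finset.mem_insert.1 hx with rfl | hx
        · exact h
        · exact hΓ x hx
      · have hneg : M l.neg = true := by
          by_contra h'
          exact h ((hM l).2 h')
        refine ih2 M hM ?_ hΔ
        intro x hx
        rcases Finset.mem_insert.1 hx with rfl | hx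
        · exact hneg
        · exact hΓ x hx

lemma dpll_allneg : ∀ (n : ℕ) (C : Clause) (Γ : Valu) (Δ : CNF), C.card = n → C ∈ Δ →
    (∀ l ∈ C, Lit.neg l ∈ Γ) → DPLL Γ Δ := by
  intro n
  induction n with
  | zero =>
      intro C Γ Δ hc hC _
      rw [Finset.card_eq_zero] at hc
      subst hc
      exact DPLL.conflict _ _ hC
  | succ n ih =>
      intro C Γ Δ hc hCΔ hneg
      obtain ⟨l, hl⟩ := Finset.card_pos.mp (by rw [hc]; exact Nat.succ_pos n)
      refine DPLL.red Γ Δ C (Lit.neg l) (hneg l hl) (by rw [Lit.neg_neg]; exact hl) hCΔ ?_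
      rw [Lit.neg_neg]
      refine ih (C.erase l) _ _ (by rw [Finset.card_erase_of_mem hl, hc]; omega) (Finset.mem_insert_self _ _) ?_
      intro l' hl'
      exact hneg l' (Finset.mem_of_mem_erase hl')

/-- The canonical model extending a valuation. -/
def modelOf (Γ : Valu) : Lit → Bool :=
  fun l => if l ∈ Γ then true else if l.neg ∈ Γ then false else l.sign

lemma modelOf_isModel {Γ : Valu} (h : Consistent Γ) : IsModel (modelOf Γ) := by
  intro l
  unfold modelOf
  by_cases h1 : l ∈ Γ
  · have h2 : l.neg ∉ Γ := h l h1
    simp [h1, h2, Lit.neg_neg]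
  · by_cases h2 : l.neg ∈ Γ
    · simp [h1, h2, Lit.neg_neg]
    · have : l.neg.neg ∉ Γ := by rw [Lit.neg_neg]; exact h1
      have h2' : (⟨l.var, !l.sign⟩ : Lit) ∉ Γ := h2
      simp [h1, h2, h2', this, Lit.neg]

lemma modelOf_satval (Γ : Valu) : SatVal (modelOf Γ) Γ := by
  intro l hl
  simp [modelOf, hl]

lemma dpll_complete_aux (Δ : CNF) : ∀ (n : ℕ) (Γ : Valu),
    ((Δ.sup (fun C => C.image Lit.var)) \ Γ.image Lit.var).card = n →
    Consistent Γ →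
    (∀ M, IsModel M → SatVal M Γ → ¬ SatCNF M Δ) → DPLL Γ Δ := by
  intro n
  induction n with
  | zero =>
      intro Γ hcard hcons hunsat
      have hM := modelOf_isModel hcons
      have hnsat := hunsat _ hM (modelOf_satval Γ)
      rw [SatCNF] at hnsat
      push_neg at hnsat
      obtain ⟨C, hCΔ, hfail⟩ := hnsat
      refine dpll_allneg C.card C Γ Δ rfl hCΔ ?_
      intro l hl
      have hempty : (Δ.sup (fun C => C.image Lit.var)) \ Γ.image Lit.var = ∅ :=
        Finset.card_eq_zero.mp hcard
      have hvarΔ : l.var ∈ Δ.sup (fun C => C.image Lit.var) :=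
        Finset.mem_sup.2 ⟨C, hCΔ, Finset.mem_image_of_mem _ hl⟩
      have hvar : l.var ∈ Γ.image Lit.var := by
        by_contra hc
        have : l.var ∈ (Δ.sup (fun C => C.image Lit.var)) \ Γ.image Lit.var :=
          Finset.mem_sdiff.2 ⟨hvarΔ, hc⟩
        rw [hempty] at this
        simp at this
      obtain ⟨g, hgΓ, hgv⟩ := Finset.mem_image.mp hvar
      have hlΓ : l ∉ Γ := by
        intro h
        exact (hfail l hl) (by simp [modelOf, h])
      by_cases hs : g.sign = l.sign
      · exfalso
        apply hlΓ
        have : g = l := by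
          cases g; cases l
          simp_all
        rwa [this] at hgΓ
      · have : g = l.neg := by
          cases g; cases l
          simp only [Lit.neg, Lit.mk.injEq] at *
          exact ⟨hgv, Bool.eq_not_of_ne hs⟩
        rwa [this] at hgΓ
  | succ n ih =>
      intro Γ hcard hcons hunsat
      have hne : ((Δ.sup (fun C => C.image Lit.var)) \ Γ.image Lit.var).Nonempty := by
        rw [← Finset.card_pos, hcard]; omega
      obtain ⟨v, hv⟩ := hne
      have hvΔ := (Finset.mem_sdiff.1 hv).1
      have hvΓ := (Finset.mem_sdiff.1 hv).2
      have key : ∀ l : Lit, l.var = v → DPLL (insert l Γ) Δ := by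
        intro l hlv
        refine ih (insert l Γ) ?_ ?_ ?_
        · rw [Finset.image_insert, hlv, Finset.sdiff_insert]
          rw [Finset.card_erase_of_mem hv, hcard]
          omega
        · intro x hx
          rcases Finset.mem_insert.1 hx with rfl | hx
          · intro hc
            rcases Finset.mem_insert.1 hc with hc | hc
            · exact Lit.neg_ne x hc
            · exact hvΓ (by rw [← hlv]; exact Finset.mem_image.2 ⟨x.neg, hc, rfl⟩)
          · intro hc
            rcases Finset.mem_insert.1 hc with hc | hc
            · apply hvΓ
              refine Finset.mem_image.2 ⟨x, hx, ?_⟩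
              have : x.neg.var = v := by rw [hc, hlv]
              simpa [Lit.neg] using this
            · exact hcons x hx hc
        · intro M hM hsat
          refine hunsat M hM ?_
          intro x hx
          exact hsat x (Finset.mem_insert_of_mem hx)
      exact DPLL.split Γ Δ ⟨v, true⟩ (key _ rfl) (key _ rfl)

/-- Unsatisfiability is equivalent to DPLL derivability from the empty valuation. -/
theorem dpll_unsat_iff (Δ : CNF) :
    (¬ ∃ M : Lit → Bool, IsModel M ∧ SatCNF M Δ) ↔ DPLL (∅ : Valu) Δ := by
  constructor
  · intro h
    refine dpll_complete_aux Δ _ ∅ rfl (by intro l hl; simp at hl) ?_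
    intro M hM _ hsat
    exact h ⟨M, hM, hsat⟩
  · rintro h ⟨M, hM, hsat⟩
    exact dpll_sound h M hM (by intro l hl; simp at hl) hsat
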